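/- arXiv:1406.1000 — 2 statements merged into one kernel-verified Lean document; each statement's English description precedes it below -/
import Mathlib

section
/- Let D be a nonempty type, n ≥ 1, and r_1, …, r_n : D → ℝ. Suppose that for each i ∈ {1,…,n} the element d_i ∈ D minimizes the partial-sum risk, i.e. ∑_{j=1}^{i} r_j(d_i) ≤ ∑_{j=1}^{i} r_j(d) for all d ∈ D. Then ∑_{i=1}^{n} r_i(d_i) ≤ ∑_{i=1}^{n} r_i(d_n). (In words: applying at each stage i the rule that is optimal for the first i components has total risk no larger than applying the rule optimal for all n components throughout; this is the content of Samuel's lemma comparing sequential and retrospective compound risks.) -/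
/-- Samuel's lemma (abstract form): if at each stage `i` the decision `d i` minimizes the
aggregate risk over the first `i` components, then the total risk of the sequential procedure
`i ↦ d i` is no larger than the total risk of using the retrospective rule `d n` throughout. -/
theorem samuel_lemma {D : Type*} [Nonempty D] (n : ℕ) (hn : 1 ≤ n)
    (r : ℕ → D → ℝ) (d : ℕ → D)
    (hmin : ∀ i ∈ Finset.Icc 1 n, ∀ d' : D,
      ∑ j ∈ Finset.Icc 1 i, r j (d i) ≤ ∑ j ∈ Finset.Icc 1 i, r j d') :
    ∑ i ∈ Finset.Icc 1 n, r i (d i) ≤ ∑ i ∈ Finset.Icc 1 n, r i (d n) := by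
  have key : ∀ m, 1 ≤ m → m ≤ n →
      ∑ i ∈ Finset.Icc 1 m, r i (d i) ≤ ∑ i ∈ Finset.Icc 1 m, r i (d m) := by
    intro m
    induction m with
    | zero => intro h; omega
    | succ k ih =>
      intro _ hk
      rcases Nat.eq_zero_or_pos k with hk0 | hk1
      · subst hk0; simp
      · have hstep : Finset.Icc 1 (k+1) = insert (k+1) (Finset.Icc 1 k) := by
          rw [← Finset.insert_Icc_right_eq_Icc_add_one (by omega)]
        have hnotmem : k+1 ∉ Finset.Icc 1 k := by simp
        rw [hstep, Finset.sum_insert hnotmem, Finset.sum_insert hnotmem]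
        have h1 := ih hk1 (by omega)
        have h2 := hmin k (by simp; omega) (d (k+1))
        linarith
  exact key n hn le_rfl
end

section
/- Let K(x) = 2/(e^x + e^{−x})², let n ≥ 1, σ > 0, and Z_1, …, Z_n ∈ ℝ. Define f̂(z) = (1/(nσ)) ∑_{j=1}^{n} K((z − Z_j)/σ) and ĝ(z) = (1/(nσ²)) ∑_{j=1}^{n} K′((z − Z_j)/σ), where K′ is the derivative of K. Then f̂(z) > 0 for all z, f̂ is differentiable with f̂′ = ĝ, and sup_{z ∈ ℝ} |ĝ(z)/f̂(z)| < 2/σ. Consequently the estimator δ̂(z) = z + ĝ(z)/f̂(z) satisfies |δ̂(z) − z| < 2/σ for all z ∈ ℝ. -/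
open Real Finset

private lemma logistic_hasDerivAt (K : ℝ → ℝ)
    (hK : ∀ x, K x = 2 / (Real.exp x + Real.exp (-x)) ^ 2) (x : ℝ) :
    HasDerivAt K
      (-4 * (Real.exp x - Real.exp (-x)) / (Real.exp x + Real.exp (-x)) ^ 3) x := by
  have hu : 0 < Real.exp x + Real.exp (-x) := by positivity
  have h2 : HasDerivAt (fun y : ℝ => Real.exp (-y)) (-Real.exp (-x)) x := by
    exact ((Real.hasDerivAt_exp (-x)).comp x ((hasDerivAt_id x).neg)).congr_deriv (by simp)
  have h1 : HasDerivAt (fun y => Real.exp y + Real.exp (-y))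
      (Real.exp x - Real.exp (-x)) x := by
    exact ((Real.hasDerivAt_exp x).add h2).congr_deriv (by ring)
  have h3 := h1.pow 2
  have h4 := (hasDerivAt_const x (2:ℝ)).div h3 (pow_ne_zero 2 hu.ne')
  have hKeq : K = fun y => 2 / (Real.exp y + Real.exp (-y)) ^ 2 := funext hK
  rw [hKeq]
  refine h4.congr_deriv ?_
  simp only [Pi.pow_apply]
  field_simp
  ring

private lemma logistic_deriv_bound (K : ℝ → ℝ)
    (hK : ∀ x, K x = 2 / (Real.exp x + Real.exp (-x)) ^ 2) (x : ℝ) :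
    |deriv K x| < 2 * K x := by
  have hu : 0 < Real.exp x + Real.exp (-x) := by positivity
  have hd := (logistic_hasDerivAt K hK x).deriv
  rw [hd, hK]
  have hs : |Real.exp x - Real.exp (-x)| < Real.exp x + Real.exp (-x) := by
    rw [abs_sub_lt_iff]
    constructor <;> nlinarith [Real.exp_pos x, Real.exp_pos (-x)]
  rw [abs_div, abs_of_pos (by positivity : (0:ℝ) < (Real.exp x + Real.exp (-x)) ^ 3)]
  have habs : |(-4 : ℝ) * (Real.exp x - Real.exp (-x))| =
      4 * |Real.exp x - Real.exp (-x)| := by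
    rw [abs_mul]; norm_num
  rw [habs]
  rw [div_lt_iff₀ (by positivity)]
  have h2K : 2 * (2 / (Real.exp x + Real.exp (-x)) ^ 2) *
      (Real.exp x + Real.exp (-x)) ^ 3 = 4 * (Real.exp x + Real.exp (-x)) := by
    field_simp; ring
  rw [h2K]
  nlinarith [abs_nonneg (Real.exp x - Real.exp (-x))]

/-- With the logistic kernel `K(x) = 2/(eˣ + e⁻ˣ)²`, the kernel density estimate
`f̂(z) = (nσ)⁻¹ ∑ K((z - Zⱼ)/σ)` is positive and differentiable with derivative
`ĝ(z) = (nσ²)⁻¹ ∑ K'((z - Zⱼ)/σ)`, with `|ĝ(z)/f̂(z)| < 2/σ` for all `z`; consequently the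
estimated empirical Bayes rule `δ̂(z) = z + ĝ(z)/f̂(z)` satisfies `|δ̂(z) - z| < 2/σ`. -/
theorem kde_logistic_ratio_bound
    (K : ℝ → ℝ)
    (hK : ∀ x, K x = 2 / (Real.exp x + Real.exp (-x)) ^ 2)
    (n : ℕ) (hn : 1 ≤ n) (σ : ℝ) (hσ : 0 < σ) (Z : ℕ → ℝ)
    (fhat ghat δhat : ℝ → ℝ)
    (hfhat : ∀ z, fhat z = (1 / (n * σ)) * ∑ j ∈ Finset.range n, K ((z - Z j) / σ))
    (hghat : ∀ z, ghat z = (1 / (n * σ ^ 2)) * ∑ j ∈ Finset.range n, deriv K ((z - Z j) / σ))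
    (hδhat : ∀ z, δhat z = z + ghat z / fhat z) :
    (∀ z : ℝ, 0 < fhat z) ∧
    (∀ z : ℝ, HasDerivAt fhat (ghat z) z) ∧
    (∀ z : ℝ, |ghat z / fhat z| < 2 / σ) ∧
    (∀ z : ℝ, |δhat z - z| < 2 / σ) := by
  have hn0 : (0:ℝ) < n := by exact_mod_cast Nat.lt_of_lt_of_le Nat.zero_lt_one hn
  have hne : (Finset.range n).Nonempty := Finset.nonempty_range_iff.mpr (by omega)
  have hKpos : ∀ x : ℝ, 0 < K x := by
    intro x; rw [hK]; positivity
  have hSpos : ∀ z : ℝ, 0 < ∑ j ∈ Finset.range n, K ((z - Z j) / σ) :=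
    fun z => Finset.sum_pos (fun j _ => hKpos _) hne
  have hfpos : ∀ z : ℝ, 0 < fhat z := by
    intro z; rw [hfhat]
    exact mul_pos (by positivity) (hSpos z)
  have hTS : ∀ z : ℝ, |∑ j ∈ Finset.range n, deriv K ((z - Z j) / σ)| <
      2 * ∑ j ∈ Finset.range n, K ((z - Z j) / σ) := by
    intro z
    calc |∑ j ∈ Finset.range n, deriv K ((z - Z j) / σ)|
        ≤ ∑ j ∈ Finset.range n, |deriv K ((z - Z j) / σ)| :=
          Finset.abs_sum_le_sum_abs _ _
      _ < ∑ j ∈ Finset.range n, 2 * K ((z - Z j) / σ) :=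
          Finset.sum_lt_sum_of_nonempty hne (fun j _ => logistic_deriv_bound K hK _)
      _ = 2 * ∑ j ∈ Finset.range n, K ((z - Z j) / σ) := by rw [Finset.mul_sum]
  have hratio : ∀ z : ℝ, ghat z / fhat z =
      (∑ j ∈ Finset.range n, deriv K ((z - Z j) / σ)) /
        (σ * ∑ j ∈ Finset.range n, K ((z - Z j) / σ)) := by
    intro z
    rw [hghat, hfhat]
    have hS := (hSpos z).ne'
    field_simp
  have hbd : ∀ z : ℝ, |ghat z / fhat z| < 2 / σ := by
    intro z
    rw [hratio z, abs_div,
      abs_of_pos (mul_pos hσ (hSpos z))]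
    rw [div_lt_div_iff₀ (mul_pos hσ (hSpos z)) hσ]
    nlinarith [hTS z, hSpos z, abs_nonneg (∑ j ∈ Finset.range n, deriv K ((z - Z j) / σ))]
  refine ⟨hfpos, ?_, hbd, ?_⟩
  · intro z
    have hterm : ∀ j ∈ Finset.range n, HasDerivAt (fun y => K ((y - Z j) / σ))
        (deriv K ((z - Z j) / σ) * (1 / σ)) z := by
      intro j _
      have hin : HasDerivAt (fun y => (y - Z j) / σ) (1 / σ) z := by
        simpa using ((hasDerivAt_id z).sub_const (Z j)).div_const σ
      have h := (logistic_hasDerivAt K hK ((z - Z j) / σ)).comp z hin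
      rw [(logistic_hasDerivAt K hK ((z - Z j) / σ)).deriv]
      exact h
    have hsum := HasDerivAt.sum hterm
    have hmul := hsum.const_mul (1 / (n * σ))
    have hfun : fhat = fun y => (1 / (n * σ)) * ∑ j ∈ Finset.range n, K ((y - Z j) / σ) :=
      funext hfhat
    rw [hfun]
    convert hmul using 1
    · rfl
    · rfl
    · ext y; rw [Finset.sum_apply]
    rw [hghat, ← Finset.sum_mul]
    ring
  · intro z
    rw [hδhat]
    simpa using hbd z
end
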